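/- Krohn–Rhodes theorem (cascade form): let Σ be a finite type and (Q, q0, δ) a transparent Moore machine with Q a finite type and n = Fintype.card Q. Then there exist a family of finite types P : Fin n → Type, a start state s0 : ∀ j, P j, component transition maps Δ : ∀ j : Fin n, Σ → (∀ k : Fin n, k < j → P k) → P j → P j such that for every j, every a : Σ and every tuple t of lower components the map Δ j a t : P j → P j is either bijective (a permutation) or constant (a reset), and a map F : (∀ j, P j) → Q, such that for every w : List Σ, List.scanl δ q0 w = (List.scanl (fun s a => fun j => Δ j a (fun k _ => s k) (s j)) s0 w).map F. -/

import Mathlib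

open Finset

namespace KRaux

variable {Q : Type*} [Fintype Q] [DecidableEq Q]

/-- Level `k` state space: subsets of `Q` of size `card Q - k`. -/
abbrev PPn (Q : Type*) [Fintype Q] (k : ℕ) : Type _ :=
  {S : Finset Q // S.card = Fintype.card Q - k}

/-- The old value at level `j-1` (with the virtual level `-1` being `univ`). -/
def oldprev (j : ℕ) (t : ∀ k, k < j → PPn Q k) : Finset Q :=
  if h : j = 0 then univ else (t (j - 1) (by omega)).1

lemma oldprev_card_le (j : ℕ) (t : ∀ k, k < j → PPn Q k) :
    (oldprev j t).card ≤ Fintype.card Q - j + 1 := by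
  unfold oldprev
  split
  · rename_i h; subst h; simp
  · rename_i h
    have := (t (j - 1) (by omega)).2
    omega

variable (f : Q → Q)

/-- In the injective case the image map is a bijection between the
relevant subsets. -/
noncomputable def permEquiv (j : ℕ) (C : Finset Q) (H : Set.InjOn f ↑C) :
    {x : PPn Q j // x.1 ⊆ C} ≃ {x : PPn Q j // x.1 ⊆ C.image f} :=
  Equiv.ofBijective
    (fun x => ⟨⟨x.1.1.image f, by
        rw [Finset.card_image_of_injOn (H.mono (by exact_mod_cast x.2))]
        exact x.1.2⟩, Finset.image_subset_image x.2⟩)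
    (by
      constructor
      · rintro ⟨⟨S, hS⟩, hSC⟩ ⟨⟨T, hT⟩, hTC⟩ h
        simp only [Subtype.mk_eq_mk] at h ⊢
        have h' : S.image f = T.image f := h
        ext a
        constructor
        · intro ha
          have : f a ∈ T.image f := h' ▸ Finset.mem_image_of_mem f ha
          obtain ⟨b, hb, hba⟩ := Finset.mem_image.mp this
          exact H (by exact_mod_cast hTC hb) (by exact_mod_cast hSC ha) hba ▸ hb
        · intro ha
          have : f a ∈ S.image f := h' ▸ Finset.mem_image_of_mem f ha
          obtain ⟨b, hb, hba⟩ := Finset.mem_image.mp this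
          exact H (by exact_mod_cast hSC hb) (by exact_mod_cast hTC ha) hba ▸ hb
      · rintro ⟨⟨T, hT⟩, hTC⟩
        refine ⟨⟨⟨C.filter (fun c => f c ∈ T), ?_⟩, Finset.filter_subset _ _⟩, ?_⟩
        · have himg : (C.filter (fun c => f c ∈ T)).image f = T := by
            apply Finset.Subset.antisymm
            · intro y hy
              obtain ⟨c, hc, rfl⟩ := Finset.mem_image.mp hy
              exact (Finset.mem_filter.mp hc).2
            · intro y hy
              obtain ⟨c, hc, rfl⟩ := Finset.mem_image.mp (hTC hy)
              exact Finset.mem_image_of_mem f (Finset.mem_filter.mpr ⟨hc, hy⟩)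
          have : ((C.filter (fun c => f c ∈ T)).image f).card
              = (C.filter (fun c => f c ∈ T)).card :=
            Finset.card_image_of_injOn (H.mono (by
              exact_mod_cast Finset.filter_subset _ _))
          rw [himg] at this
          omega
        · apply Subtype.ext; apply Subtype.ext
          show (C.filter (fun c => f c ∈ T)).image f = T
          apply Finset.Subset.antisymm
          · intro y hy
            obtain ⟨c, hc, rfl⟩ := Finset.mem_image.mp hy
            exact (Finset.mem_filter.mp hc).2
          · intro y hy
            obtain ⟨c, hc, rfl⟩ := Finset.mem_image.mp (hTC hy)
            exact Finset.mem_image_of_mem f (Finset.mem_filter.mpr ⟨hc, hy⟩))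

lemma resetSpec (j : ℕ) (C D : Finset Q)
    (hC : C.card ≤ Fintype.card Q - j + 1) (hD : Fintype.card Q - j ≤ D.card)
    (H : ¬ Set.InjOn f ↑C) :
    ∃ S, (C.image f ∩ D) ⊆ S ∧ S ⊆ D ∧ S.card = Fintype.card Q - j := by
  have h1 : (C.image f).card ≤ C.card := Finset.card_image_le
  have h2 : (C.image f).card ≠ C.card := fun h => H (Finset.injOn_of_card_image_eq h)
  have h3 : (C.image f ∩ D).card ≤ (C.image f).card :=
    Finset.card_le_card Finset.inter_subset_left
  have h4 : (C.image f ∩ D).card ≤ D.card :=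
    Finset.card_le_card Finset.inter_subset_right
  have hcardQ : C.card ≤ Fintype.card Q := Finset.card_le_univ C
  exact Finset.exists_subsuperset_card_eq Finset.inter_subset_right (by omega) hD

/-- The permutation-or-reset component map. -/
noncomputable def newVal (j : ℕ) (C D : Finset Q)
    (hC : C.card ≤ Fintype.card Q - j + 1) (hD : Fintype.card Q - j ≤ D.card)
    (x : PPn Q j) : PPn Q j :=
  if H : Set.InjOn f ↑C then
    Equiv.extendSubtype (permEquiv f j C H) x
  else
    ⟨(resetSpec f j C D hC hD H).choose, (resetSpec f j C D hC hD H).choose_spec.2.2⟩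

lemma newVal_bij_or_const (j : ℕ) (C D : Finset Q) (hC) (hD) :
    Function.Bijective (newVal f j C D hC hD) ∨
      ∃ p : PPn Q j, ∀ x, newVal f j C D hC hD x = p := by
  unfold newVal
  split
  · rename_i H; exact Or.inl (Equiv.bijective _)
  · rename_i H; exact Or.inr ⟨_, fun _ => rfl⟩

lemma newVal_of_injOn (j : ℕ) (C D : Finset Q) (hC) (hD) (H : Set.InjOn f ↑C)
    (x : PPn Q j) (hx : x.1 ⊆ C) :
    (newVal f j C D hC hD x).1 = x.1.image f := by
  unfold newVal
  rw [dif_pos H, Equiv.extendSubtype_apply_of_mem (permEquiv f j C H) x hx]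
  rfl

lemma newVal_reset_sub (j : ℕ) (C D : Finset Q) (hC) (hD) (H : ¬ Set.InjOn f ↑C)
    (x : PPn Q j) :
    (C.image f ∩ D) ⊆ (newVal f j C D hC hD x).1 ∧ (newVal f j C D hC hD x).1 ⊆ D := by
  unfold newVal
  rw [dif_neg H]
  exact ⟨(resetSpec f j C D hC hD H).choose_spec.1,
    (resetSpec f j C D hC hD H).choose_spec.2.1⟩

/-- `DD f j t` is the new value at level `j - 1` (with `DD f 0 = univ`). -/
noncomputable def DD : (j : ℕ) → (t : ∀ k, k < j → PPn Q k) →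
    {S : Finset Q // Fintype.card Q - j ≤ S.card}
  | 0, _ => ⟨univ, by simp⟩
  | j+1, t =>
    let t' : ∀ k, k < j → PPn Q k := fun k h => t k (by omega)
    let x := newVal f j (oldprev j t') (DD j t').1 (oldprev_card_le j t')
      (DD j t').2 (t j (by omega))
    ⟨x.1, by have := x.2; omega⟩

/-- Restriction of a full state. -/
def restrictT (s : ∀ k : ℕ, PPn Q k) (j : ℕ) : ∀ k, k < j → PPn Q k := fun k _ => s k

/-- The level-`j` component map, given the lower old values. -/
noncomputable def compN (j : ℕ) (t : ∀ k, k < j → PPn Q k) : PPn Q j → PPn Q j :=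
  newVal f j (oldprev j t) (DD f j t).1 (oldprev_card_le j t) (DD f j t).2

lemma compN_bij_or_const (j : ℕ) (t : ∀ k, k < j → PPn Q k) :
    Function.Bijective (compN f j t) ∨ ∃ p : PPn Q j, ∀ x, compN f j t x = p :=
  newVal_bij_or_const f j _ _ _ _

/-- One step of the cascade. -/
noncomputable def stepN (s : ∀ k : ℕ, PPn Q k) (j : ℕ) : PPn Q j :=
  compN f j (restrictT s j) (s j)

lemma DD_succ (s : ∀ k : ℕ, PPn Q k) (j : ℕ) :
    (DD f (j+1) (restrictT s (j+1))).1 = (stepN f s j).1 := rfl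

lemma oldprev_restrict_succ (s : ∀ k : ℕ, PPn Q k) (j : ℕ) :
    oldprev (j+1) (restrictT s (j+1)) = (s j).1 := by
  unfold oldprev restrictT
  simp

/-- Chain condition. -/
def Chain' (s : ∀ k : ℕ, PPn Q k) : Prop := ∀ k, (s (k+1)).1 ⊆ (s k).1

lemma sub_oldprev {s : ∀ k : ℕ, PPn Q k} (hc : Chain' s) (j : ℕ) :
    (s j).1 ⊆ oldprev j (restrictT s j) := by
  unfold oldprev
  split
  · exact Finset.subset_univ _
  · rename_i h
    obtain ⟨j, rfl⟩ : ∃ j', j = j' + 1 := ⟨j - 1, by omega⟩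
    simpa [restrictT] using hc j

/-- Master invariant: the image of the old level-`j-1` value is contained in
the new level-`j-1` value. -/
lemma master {s : ∀ k : ℕ, PPn Q k} (hc : Chain' s) :
    ∀ j, (oldprev j (restrictT s j)).image f ⊆ (DD f j (restrictT s j)).1 := by
  intro j
  induction j with
  | zero => simp [oldprev, DD]
  | succ j ih =>
    rw [DD_succ, oldprev_restrict_succ]
    unfold stepN compN
    by_cases H : Set.InjOn f ↑(oldprev j (restrictT s j))
    · rw [newVal_of_injOn f j _ _ _ _ H (s j) (sub_oldprev hc j)]
    · have h := newVal_reset_sub f j (oldprev j (restrictT s j))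
        (DD f j (restrictT s j)).1 (oldprev_card_le j _) (DD f j (restrictT s j)).2 H (s j)
      refine Finset.Subset.trans ?_ h.1
      intro y hy
      obtain ⟨c, hcmem, rfl⟩ := Finset.mem_image.mp hy
      refine Finset.mem_inter.mpr ⟨?_, ?_⟩
      · exact Finset.mem_image_of_mem f (sub_oldprev hc j hcmem)
      · exact ih (Finset.mem_image_of_mem f (sub_oldprev hc j hcmem))

lemma step_mem {s : ∀ k : ℕ, PPn Q k} (hc : Chain' s) (j : ℕ) {q : Q}
    (hq : q ∈ (s j).1) : f q ∈ (stepN f s j).1 := by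
  have := master f hc (j+1)
  rw [DD_succ, oldprev_restrict_succ] at this
  exact this (Finset.mem_image_of_mem f hq)

lemma step_chain {s : ∀ k : ℕ, PPn Q k} (hc : Chain' s) : Chain' (stepN f s) := by
  intro j
  show (stepN f s (j+1)).1 ⊆ (stepN f s j).1
  rw [← DD_succ f s j]
  unfold stepN compN
  by_cases H : Set.InjOn f ↑(oldprev (j+1) (restrictT s (j+1)))
  · rw [newVal_of_injOn f (j+1) _ _ _ _ H (s (j+1)) (sub_oldprev hc (j+1))]
    have hm := master f hc (j+1)
    rw [oldprev_restrict_succ] at hm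
    rw [DD_succ] at hm
    unfold stepN compN at hm
    exact Finset.Subset.trans
      (Finset.image_subset_image (by simpa [restrictT] using hc j)) hm
  · exact (newVal_reset_sub f (j+1) _ _ _ _ H (s (j+1))).2

end KRaux

namespace KRaux

open Finset

variable {Q : Type*} [Fintype Q] [DecidableEq Q]

/-- The goodness invariant: chain plus membership of the tracked state. -/
def GoodN (s : ∀ k : ℕ, PPn Q k) (q : Q) : Prop :=
  Chain' s ∧ ∀ k, k < Fintype.card Q → q ∈ (s k).1

lemma GoodN_step {s : ∀ k : ℕ, PPn Q k} {q : Q} (f : Q → Q) (h : GoodN s q) :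
    GoodN (stepN f s) (f q) :=
  ⟨step_chain f h.1, fun k hk => step_mem f h.1 k (h.2 k hk)⟩

/-- Extraction of the tracked state. -/
noncomputable def FN (q0 : Q) (s : ∀ k : ℕ, PPn Q k) : Q :=
  if h : ∃ a, (s (Fintype.card Q - 1)).1 = {a} then h.choose else q0

lemma FN_good (q0 : Q) {s : ∀ k : ℕ, PPn Q k} {q : Q} (hn : 0 < Fintype.card Q)
    (h : GoodN s q) : FN q0 s = q := by
  have hcard : (s (Fintype.card Q - 1)).1.card = 1 := by
    have := (s (Fintype.card Q - 1)).2; omega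
  obtain ⟨a, ha⟩ := Finset.card_eq_one.mp hcard
  have hq : q ∈ (s (Fintype.card Q - 1)).1 := h.2 _ (by omega)
  rw [ha, Finset.mem_singleton] at hq
  unfold FN
  rw [dif_pos ⟨a, ha⟩]
  have h2 := (Exists.intro a ha : ∃ b, (s (Fintype.card Q - 1)).1 = {b}).choose_spec
  have h3 := ha.symm.trans h2
  exact (Finset.singleton_injective h3).symm.trans hq.symm

/-- The run lemma, in ℕ-indexed form. -/
lemma runN {A : Type*} (δ : Q → A → Q) (q0 : Q) (hn : 0 < Fintype.card Q)
    (w : List A) :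
    ∀ (s : ∀ k : ℕ, PPn Q k) (q : Q), GoodN s q →
      List.scanl δ q w =
        (List.scanl (fun s a => stepN (fun x => δ x a) s) s w).map (FN q0) := by
  induction w with
  | nil => intro s q h; simp [FN_good q0 hn h]
  | cons a w ih =>
    intro s q h
    simp only [List.scanl_cons, List.map_cons]
    rw [FN_good q0 hn h]
    congr 1
    exact ih _ _ (GoodN_step (fun x => δ x a) h)

/-- The initial chain. -/
noncomputable def initN (q0 : Q) (hn : 0 < Fintype.card Q) (k : ℕ) : PPn Q k :=
  if h : k < Fintype.card Q then
    ⟨Finset.image ((Equiv.swap (⟨Fintype.card Q - 1, by omega⟩ : Fin (Fintype.card Q))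
        ((Fintype.equivFin Q) q0)).trans (Fintype.equivFin Q).symm)
        (Finset.Ici (⟨k, h⟩ : Fin (Fintype.card Q))), by
      rw [Finset.card_image_of_injective _ (Equiv.injective _), Fin.card_Ici]⟩
  else ⟨∅, by simp; omega⟩

lemma initN_good (q0 : Q) (hn : 0 < Fintype.card Q) : GoodN (initN q0 hn) q0 := by
  constructor
  · intro k
    by_cases h1 : k + 1 < Fintype.card Q
    · have h0 : k < Fintype.card Q := by omega
      simp only [initN, dif_pos h1, dif_pos h0]
      apply Finset.image_subset_image
      intro i hi
      simp only [Finset.mem_Ici] at hi ⊢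
      exact le_trans (by simp only [Fin.le_def]; omega) hi
    · simp only [initN, dif_neg h1]
      intro x hx
      simp at hx
  · intro k hk
    simp only [initN, dif_pos hk]
    apply Finset.mem_image.mpr
    refine ⟨⟨Fintype.card Q - 1, by omega⟩, ?_, ?_⟩
    · simp only [Finset.mem_Ici, Fin.le_def]
      omega
    · simp

end KRaux

namespace KRaux

open Finset

variable {Q : Type*} [Fintype Q] [DecidableEq Q]

/-- Decoding a `Fin`-indexed cascade state into a ℕ-indexed one. -/
noncomputable def dec (E : ∀ k : ℕ, PPn Q k ≃ Fin (Fintype.card (PPn Q k)))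
    (s : ∀ j : Fin (Fintype.card Q), Fin (Fintype.card (PPn Q j.1))) :
    ∀ k : ℕ, PPn Q k := fun k =>
  if h : k < Fintype.card Q then (E k).symm (s ⟨k, h⟩)
  else ⟨∅, by simp; omega⟩

/-- The `Fin`-indexed cascade step. -/
noncomputable def stepF {A : Type*} (δ : Q → A → Q)
    (E : ∀ k : ℕ, PPn Q k ≃ Fin (Fintype.card (PPn Q k))) (a : A)
    (s : ∀ j : Fin (Fintype.card Q), Fin (Fintype.card (PPn Q j.1)))
    (j : Fin (Fintype.card Q)) : Fin (Fintype.card (PPn Q j.1)) :=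
  E j.1 (compN (fun q => δ q a) j.1
    (fun k hk => (E k).symm (s ⟨k, lt_trans hk j.2⟩)) ((E j.1).symm (s j)))

lemma dec_stepF {A : Type*} (δ : Q → A → Q) (E) (a : A) (s) :
    dec E (stepF δ E a s) = stepN (fun q => δ q a) (dec E s) := by
  funext k
  by_cases h : k < Fintype.card Q
  · have ht : (fun (k' : ℕ) (hk' : k' < k) => (E k').symm (s ⟨k', lt_trans hk' h⟩))
        = restrictT (dec E s) k := by
      funext k' hk'
      simp [restrictT, dec, dif_pos (lt_trans hk' h)]
    have hdk : dec E s k = (E k).symm (s ⟨k, h⟩) := dif_pos h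
    simp only [dec, dif_pos h, stepF, Equiv.symm_apply_apply]
    unfold stepN
    rw [← ht, hdk]
  · apply Subtype.ext
    have h2 := (stepN (fun q => δ q a) (dec E s) k).2
    have h3 : (stepN (fun q => δ q a) (dec E s) k).1 = ∅ :=
      Finset.card_eq_zero.mp (by omega)
    simp [dec, dif_neg h, h3]

lemma dec_init (q0 : Q) (hn : 0 < Fintype.card Q) (E) :
    dec E (fun j : Fin (Fintype.card Q) => E j.1 (initN q0 hn j.1)) = initN q0 hn := by
  funext k
  by_cases h : k < Fintype.card Q
  · simp [dec, dif_pos h]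
  · apply Subtype.ext
    simp [dec, dif_neg h, initN]

lemma scanl_dec {A : Type*} (δ : Q → A → Q) (q0 : Q) (E) (w : List A) :
    ∀ s, ((List.scanl (fun s a => stepF δ E a s) s w).map (fun x => FN q0 (dec E x)))
      = (List.scanl (fun s a => stepN (fun q => δ q a) s) (dec E s) w).map (FN q0) := by
  induction w with
  | nil => intro s; simp
  | cons a w ih =>
    intro s
    simp only [List.scanl_cons, List.map_cons]
    refine congrArg _ ?_
    rw [← dec_stepF δ E a s]
    exact ih _

lemma final {A : Type*} (δ : Q → A → Q) (q0 : Q) (hn : 0 < Fintype.card Q)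
    (E : ∀ k : ℕ, PPn Q k ≃ Fin (Fintype.card (PPn Q k))) (w : List A) :
    List.scanl δ q0 w =
      (List.scanl (fun s a => stepF δ E a s)
        (fun j : Fin (Fintype.card Q) => E j.1 (initN q0 hn j.1)) w).map
          (fun x => FN q0 (dec E x)) := by
  rw [scanl_dec δ q0 E w, dec_init q0 hn E]
  exact runN δ q0 hn w _ q0 (initN_good q0 hn)

end KRaux

/-- Krohn–Rhodes theorem (cascade form): the run of any transparent
Moore machine with `n` states is computed, via a character-wise map, by a cascade
of `n` permutation-reset components. -/
theorem krohn_rhodes_cascade {A Q : Type*} [Fintype A] [Fintype Q]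
    (q0 : Q) (δ : Q → A → Q) :
    ∃ (P : Fin (Fintype.card Q) → Type) (_ : ∀ j, Fintype (P j))
      (s0 : ∀ j, P j)
      (Δ : ∀ j : Fin (Fintype.card Q),
        A → (∀ k : Fin (Fintype.card Q), k < j → P k) → P j → P j),
      (∀ (j : Fin (Fintype.card Q)) (a : A) (t : ∀ k, k < j → P k),
        Function.Bijective (Δ j a t) ∨ ∃ p : P j, ∀ x : P j, Δ j a t x = p) ∧
      ∃ F : (∀ j, P j) → Q,
        ∀ w : List A,
          List.scanl δ q0 w =
            (List.scanl (fun s a => fun j => Δ j a (fun k _ => s k) (s j)) s0 w).map F := by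
  classical
  have hn : 0 < Fintype.card Q := Fintype.card_pos_iff.mpr ⟨q0⟩
  let E : ∀ k : ℕ, KRaux.PPn Q k ≃ Fin (Fintype.card (KRaux.PPn Q k)) :=
    fun k => Fintype.equivFin _
  refine ⟨fun j => Fin (Fintype.card (KRaux.PPn Q j.1)), fun j => inferInstance,
    fun j => E j.1 (KRaux.initN q0 hn j.1),
    fun j a t x => E j.1 (KRaux.compN (fun q => δ q a) j.1
      (fun k hk => (E k).symm (t ⟨k, lt_trans hk j.2⟩ hk)) ((E j.1).symm x)),
    ?_, ?_⟩
  · intro j a t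
    rcases KRaux.compN_bij_or_const (fun q => δ q a) j.1
        (fun k hk => (E k).symm (t ⟨k, lt_trans hk j.2⟩ hk)) with hb | ⟨p, hp⟩
    · left
      exact ((E j.1).bijective.comp hb).comp (E j.1).symm.bijective
    · right
      exact ⟨E j.1 p, fun x => congrArg (E j.1) (hp _)⟩
  · exact ⟨fun x => KRaux.FN q0 (KRaux.dec E x),
      fun w => KRaux.final δ q0 hn E w⟩
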